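/- Let q > 0, λ > 0, β > 0 and M ≥ 1 be real numbers, and let v : ℂ → ℝ be a measurable function such that (i) ∫_{{z : |z| ≤ 1}} exp(λ·|v(z)|) dA(z) ≤ β, where dA is Lebesgue measure on ℂ, and (ii) |v(0) − v(θ)| ≤ M/(1 + |log |θ||)^q for all θ ∈ ℂ with 0 < |θ| ≤ 1. Then, setting A := 1 + (2 + max(0, log(β/π)))/λ, one has |v(0)| ≤ A·(1 + M^{1/(q+1)}). -/

import Mathlib

open MeasureTheory

theorem stmt_11 (q lam β M : ℝ) (hq : 0 < q) (hlam : 0 < lam) (hβ : 0 < β) (hM : 1 ≤ M)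
    (v : ℂ → ℝ) (hv : Measurable v)
    (hint : ∫⁻ z in Metric.closedBall (0 : ℂ) 1,
        ENNReal.ofReal (Real.exp (lam * |v z|)) ≤ ENNReal.ofReal β)
    (hmod : ∀ θ : ℂ, 0 < ‖θ‖ → ‖θ‖ ≤ 1 →
      |v 0 - v θ| ≤ M / (1 + |Real.log (‖θ‖)|) ^ q) :
    |v 0| ≤ (1 + (2 + max 0 (Real.log (β / Real.pi))) / lam) * (1 + M ^ (1 / (q + 1))) := by
  set t : ℝ := M ^ (1 / (q + 1)) with ht_def
  have hM0 : (0:ℝ) < M := lt_of_lt_of_le one_pos hM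
  have ht1 : 1 ≤ t := Real.one_le_rpow hM (by positivity)
  have ht0 : 0 < t := lt_of_lt_of_le one_pos ht1
  set r : ℝ := Real.exp (-t) with hr_def
  have hr0 : 0 < r := Real.exp_pos _
  have hr1 : r ≤ 1 := Real.exp_le_one_iff.mpr (by linarith)
  set δ : ℝ := M / (1 + t) ^ q with hδ_def
  have hδ0 : 0 ≤ δ := div_nonneg hM0.le (Real.rpow_nonneg (by linarith) _)
  set c : ℝ := |v 0| - δ with hc_def
  -- δ ≤ t
  have hδt : δ ≤ t := by
    have h1 : t ^ q ≤ (1 + t) ^ q :=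
      Real.rpow_le_rpow ht0.le (by linarith) hq.le
    have h2 : δ ≤ M / t ^ q :=
      div_le_div_of_nonneg_left hM0.le (Real.rpow_pos_of_pos ht0 q) h1
    have hq1 : q + 1 ≠ 0 := by positivity
    have h3 : t ^ q * t = M := by
      rw [ht_def, ← Real.rpow_mul hM0.le, ← Real.rpow_add hM0]
      rw [show 1/(q+1)*q + 1/(q+1) = 1 by field_simp]
      exact Real.rpow_one M
    have h4 : M / t ^ q = t := by
      rw [div_eq_iff (ne_of_gt (Real.rpow_pos_of_pos ht0 q))]
      linarith [h3]
    linarith [h2, h4.symm.le, h4.le]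
  -- pointwise bound on closed ball r
  have hpt : ∀ z ∈ Metric.closedBall (0:ℂ) r,
      ENNReal.ofReal (Real.exp (lam * c)) ≤ ENNReal.ofReal (Real.exp (lam * |v z|)) := by
    intro z hz
    have hzr : ‖z‖ ≤ r := by
      simpa [Complex.dist_eq] using Metric.mem_closedBall.mp hz
    have hvc : c ≤ |v z| := by
      rcases eq_or_ne z 0 with rfl | hz0
      · simp only [hc_def]; linarith
      · have habs : 0 < ‖z‖ := by simpa using hz0
        have hz1 : ‖z‖ ≤ 1 := hzr.trans hr1
        have hb := hmod z habs hz1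
        have hlog : t ≤ |Real.log (‖z‖)| := by
          have : Real.log (‖z‖) ≤ -t := by
            calc Real.log (‖z‖) ≤ Real.log r := Real.log_le_log habs hzr
              _ = -t := Real.log_exp _
          calc t ≤ -(Real.log (‖z‖)) := by linarith
            _ ≤ |Real.log (‖z‖)| := neg_le_abs _
        have hq1 : (1 + t) ^ q ≤ (1 + |Real.log (‖z‖)|) ^ q :=
          Real.rpow_le_rpow (by linarith) (by linarith) hq.le
        have hmono : M / (1 + |Real.log (‖z‖)|) ^ q ≤ δ :=
          div_le_div_of_nonneg_left hM0.le (Real.rpow_pos_of_pos (by linarith) q) hq1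
        have : |v 0 - v z| ≤ δ := hb.trans hmono
        have habs2 : |v 0| - |v z| ≤ δ := (abs_sub_abs_le_abs_sub _ _).trans this
        linarith
    exact ENNReal.ofReal_le_ofReal (Real.exp_le_exp.mpr
      (mul_le_mul_of_nonneg_left hvc hlam.le))
  -- integral lower bound
  have hkey : ENNReal.ofReal (Real.exp (lam * c)) * volume (Metric.closedBall (0:ℂ) r)
      ≤ ENNReal.ofReal β := by
    calc ENNReal.ofReal (Real.exp (lam * c)) * volume (Metric.closedBall (0:ℂ) r)
        = ∫⁻ _ in Metric.closedBall (0:ℂ) r, ENNReal.ofReal (Real.exp (lam * c)) := by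
          rw [setLIntegral_const]
      _ ≤ ∫⁻ z in Metric.closedBall (0:ℂ) r, ENNReal.ofReal (Real.exp (lam * |v z|)) :=
          setLIntegral_mono (by measurability) hpt
      _ ≤ ∫⁻ z in Metric.closedBall (0:ℂ) 1, ENNReal.ofReal (Real.exp (lam * |v z|)) :=
          lintegral_mono_set (Metric.closedBall_subset_closedBall hr1)
      _ ≤ ENNReal.ofReal β := hint
  -- convert to real inequality
  have hreal : Real.exp (lam * c) * (r ^ 2 * Real.pi) ≤ β := by
    have hvol : volume (Metric.closedBall (0:ℂ) r) = ENNReal.ofReal (r ^ 2 * Real.pi) := by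
      rw [Complex.volume_closedBall, ENNReal.ofReal_mul (by positivity),
        ENNReal.ofReal_pow hr0.le, ← NNReal.coe_real_pi, ENNReal.ofReal_coe_nnreal]
    rw [hvol, ← ENNReal.ofReal_mul (Real.exp_pos _).le] at hkey
    exact (ENNReal.ofReal_le_ofReal_iff hβ.le).mp hkey
  -- take logs
  have hlogs : lam * c + (-2 * t + Real.log Real.pi) ≤ Real.log β := by
    have h1 : Real.log (Real.exp (lam * c) * (r ^ 2 * Real.pi)) ≤ Real.log β :=
      Real.log_le_log (by positivity) hreal
    have h2 : Real.log (Real.exp (lam * c) * (r ^ 2 * Real.pi))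
        = lam * c + (2 * Real.log r + Real.log Real.pi) := by
      rw [Real.log_mul (Real.exp_pos _).ne' (by positivity),
        Real.log_mul (by positivity) Real.pi_pos.ne', Real.log_exp, Real.log_pow]
      push_cast; ring
    rw [h2, hr_def, Real.log_exp] at h1
    linarith
  -- conclude
  have hL : Real.log β - Real.log Real.pi ≤ max 0 (Real.log (β / Real.pi)) := by
    rw [← Real.log_div hβ.ne' Real.pi_pos.ne']
    exact le_max_right _ _
  set L := max 0 (Real.log (β / Real.pi)) with hL_def
  have hL0 : 0 ≤ L := le_max_left _ _
  have hc : lam * c ≤ L + 2 * t := by linarith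
  have hcdiv : c ≤ (L + 2 * t) / lam := by
    rw [le_div_iff₀ hlam]; linarith [mul_comm c lam]
  have hv0 : |v 0| ≤ t + (L + 2 * t) / lam := by
    have : |v 0| = c + δ := by rw [hc_def]; ring
    linarith
  have hgoal : t + (L + 2 * t) / lam ≤ (1 + (2 + L) / lam) * (1 + t) := by
    have h1 : (L + 2 * t) / lam ≤ (2 + L) * (1 + t) / lam := by
      gcongr
      nlinarith
    have h2 : (2 + L) * (1 + t) / lam = (1 + (2 + L) / lam) * (1 + t) - (1 + t) := by
      field_simp
      ring
    linarith [h1, h2, ht1]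
  calc |v 0| ≤ t + (L + 2 * t) / lam := hv0
    _ ≤ (1 + (2 + L) / lam) * (1 + t) := hgoal
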